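/- Let σ, N > 0 and β ∈ ℝ. Suppose p₁, κ₁ > 0 and p₂, κ₂ > 0 both satisfy σ²·(1 + pᵢ/N)^(−κᵢ)·(1 + κᵢ·ln(1 + pᵢ/N)) + β = 0 for i = 1, 2, and suppose p₁ < p₂. Then κ₁ > κ₂. -/
import Mathlib

/-- The map `t ↦ exp(-t) * (1+t)` is strictly decreasing on `[0, ∞)`. -/
lemma aux_strict_anti {a b : ℝ} (ha : 0 ≤ a) (hab : a < b) :
    Real.exp (-b) * (1 + b) < Real.exp (-a) * (1 + a) := by
  have h1 : (b - a) + 1 < Real.exp (b - a) :=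
    Real.add_one_lt_exp (x := b - a) (by intro h; linarith)
  have h2 : Real.exp (-a) = Real.exp (-b) * Real.exp (b - a) := by
    rw [← Real.exp_add]; ring_nf
  rw [h2]
  have hb : 0 < Real.exp (-b) := Real.exp_pos _
  have h3 := mul_lt_mul_of_pos_left h1 hb
  nlinarith [mul_nonneg (mul_nonneg hb.le ha) (sub_nonneg.mpr hab.le), h3]

lemma aux_inj {a b : ℝ} (ha : 0 ≤ a) (hb : 0 ≤ b)
    (h : Real.exp (-a) * (1 + a) = Real.exp (-b) * (1 + b)) : a = b := by
  rcases lt_trichotomy a b with h' | h' | h'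
  · exact absurd h (ne_of_gt (aux_strict_anti ha h'))
  · exact h'
  · exact absurd h (ne_of_lt (aux_strict_anti hb h'))

/-- If two power/mismatch pairs `(p₁, κ₁)` and `(p₂, κ₂)` both
satisfy the local-optimality condition
`σ²(1+p/N)^(−κ)(1 + κ ln(1+p/N)) + β = 0` with the same `β`, and `p₁ < p₂`,
then `κ₁ > κ₂`: larger transmission power entails a smaller mismatch factor. -/
theorem stmt11 (σ N β p₁ κ₁ p₂ κ₂ : ℝ) (hσ : 0 < σ) (hN : 0 < N)
    (hp₁ : 0 < p₁) (hκ₁ : 0 < κ₁) (hp₂ : 0 < p₂) (hκ₂ : 0 < κ₂)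
    (heq₁ : σ ^ 2 * (1 + p₁ / N) ^ (-κ₁) * (1 + κ₁ * Real.log (1 + p₁ / N)) + β = 0)
    (heq₂ : σ ^ 2 * (1 + p₂ / N) ^ (-κ₂) * (1 + κ₂ * Real.log (1 + p₂ / N)) + β = 0)
    (hpp : p₁ < p₂) :
    κ₁ > κ₂ := by
  have hb1 : (1 : ℝ) < 1 + p₁ / N := by
    have := div_pos hp₁ hN; linarith
  have hb2 : (1 : ℝ) < 1 + p₂ / N := by
    have := div_pos hp₂ hN; linarith
  set u₁ := Real.log (1 + p₁ / N) with hu₁def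
  set u₂ := Real.log (1 + p₂ / N) with hu₂def
  have hu₁ : 0 < u₁ := Real.log_pos hb1
  have hu₂ : 0 < u₂ := Real.log_pos hb2
  have hu12 : u₁ < u₂ := by
    apply Real.log_lt_log (by linarith)
    have h : p₁ / N < p₂ / N := div_lt_div_of_pos_right hpp hN
    linarith
  have hr1 : (1 + p₁ / N) ^ (-κ₁) = Real.exp (-(κ₁ * u₁)) := by
    rw [Real.rpow_def_of_pos (by linarith), hu₁def]; ring_nf
  have hr2 : (1 + p₂ / N) ^ (-κ₂) = Real.exp (-(κ₂ * u₂)) := by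
    rw [Real.rpow_def_of_pos (by linarith), hu₂def]; ring_nf
  rw [hr1] at heq₁
  rw [hr2] at heq₂
  have hσ2 : (0 : ℝ) < σ ^ 2 := by positivity
  have hkey : Real.exp (-(κ₁ * u₁)) * (1 + κ₁ * u₁)
      = Real.exp (-(κ₂ * u₂)) * (1 + κ₂ * u₂) := by
    have h : σ ^ 2 * (Real.exp (-(κ₁ * u₁)) * (1 + κ₁ * u₁))
        = σ ^ 2 * (Real.exp (-(κ₂ * u₂)) * (1 + κ₂ * u₂)) := by linarith
    exact mul_left_cancel₀ (ne_of_gt hσ2) h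
  have heqt : κ₁ * u₁ = κ₂ * u₂ :=
    aux_inj (by positivity) (by positivity) hkey
  by_contra hcon
  push_neg at hcon
  have : κ₁ * u₁ < κ₂ * u₂ := by
    calc κ₁ * u₁ < κ₁ * u₂ := by exact (mul_lt_mul_iff_right₀ hκ₁).mpr hu12
    _ ≤ κ₂ * u₂ := by nlinarith
  linarith
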